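/- Let g be a directed graph with source s where every vertex has in-degree at most 1. Define h(B), for a set B of edges, to be the number of vertices reachable from s in g with the edges of B removed. Then h is monotone non-increasing and supermodular in B: for edge sets X ⊆ Y and any edge e ∉ Y, h(X) − h(X ∪ {e}) ≥ h(Y) − h(Y ∪ {e}). -/

import Mathlib

/-- `hCount adj s B` is the number of vertices reachable from `s` after removing the
edge set `B` from the digraph. -/
noncomputable def hCount {V : Type*} (adj : V → V → Prop) (s : V) (B : Set (V × V)) : ℕ :=
  {v | Relation.ReflTransGen (fun a b => adj a b ∧ (a, b) ∉ B) s v}.ncard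

/-- Uniqueness of paths under in-degree ≤ 1: if `v` is reachable from `s` via two
subrelations `p` and `q` of `adj`, then it is reachable via their intersection. -/
lemma rtg_inter {V : Type*} (adj : V → V → Prop) (s : V)
    (hindeg : ∀ v a b, adj a v → adj b v → a = b)
    (p q : V → V → Prop) (hp : ∀ a b, p a b → adj a b) (hq : ∀ a b, q a b → adj a b) :
    ∀ v, Relation.ReflTransGen q s v → Relation.ReflTransGen p s v →
      Relation.ReflTransGen (fun a b => p a b ∧ q a b) s v := by
  intro v hQ
  induction hQ with
  | refl => intro _; exact Relation.ReflTransGen.refl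
  | tail hqsu hquv ih =>
    rename_i u v
    intro hP
    rcases hP.cases_tail with h | ⟨w, hPw, hpwv⟩
    · exact h ▸ Relation.ReflTransGen.refl
    · have hwu : w = u := hindeg v w u (hp _ _ hpwv) (hq _ _ hquv)
      subst hwu
      exact (ih hPw).tail ⟨hpwv, hquv⟩

/-- if every vertex has in-degree at most 1, the reachable-count
function after edge removal is monotone non-increasing and supermodular in the
removed edge set. -/
theorem stmt14 {V : Type*} [Fintype V] (adj : V → V → Prop) (s : V)
    (hindeg : ∀ v a b, adj a v → adj b v → a = b) :
    (∀ X Y : Set (V × V), X ⊆ Y → hCount adj s Y ≤ hCount adj s X) ∧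
    (∀ (X Y : Set (V × V)) (e : V × V), X ⊆ Y → e ∉ Y →
      (hCount adj s X : ℤ) - hCount adj s (X ∪ {e}) ≥
        (hCount adj s Y : ℤ) - hCount adj s (Y ∪ {e})) := by
  set R : Set (V × V) → Set V :=
    fun B => {v | Relation.ReflTransGen (fun a b => adj a b ∧ (a, b) ∉ B) s v} with hR
  have hmono : ∀ X Y : Set (V × V), X ⊆ Y → R Y ⊆ R X := by
    intro X Y hXY v hv
    exact Relation.ReflTransGen.mono (fun a b hab => ⟨hab.1, fun h => hab.2 (hXY h)⟩) _ _ hv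
  have hcard : ∀ X Y : Set (V × V), X ⊆ Y → hCount adj s Y ≤ hCount adj s X := by
    intro X Y hXY
    exact Set.ncard_le_ncard (hmono X Y hXY) (Set.toFinite _)
  refine ⟨hcard, ?_⟩
  intro X Y e hXY heY
  -- key: R Y \ R (Y ∪ {e}) ⊆ R X \ R (X ∪ {e})
  have hkey : R Y \ R (Y ∪ {e}) ⊆ R X \ R (X ∪ {e}) := by
    rintro v ⟨hvY, hvYe⟩
    refine ⟨hmono X Y hXY hvY, fun hvXe => hvYe ?_⟩
    have := rtg_inter adj s hindeg
      (fun a b => adj a b ∧ (a, b) ∉ Y) (fun a b => adj a b ∧ (a, b) ∉ X ∪ {e})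
      (fun a b h => h.1) (fun a b h => h.1) v hvXe hvY
    exact Relation.ReflTransGen.mono
      (fun a b hab => ⟨hab.1.1, fun h => h.elim (hab.1.2) (fun h' => hab.2.2 (Or.inr h'))⟩) _ _ this
  have hdiff : ∀ B : Set (V × V), e ∉ B →
      (hCount adj s B : ℤ) - hCount adj s (B ∪ {e}) = ((R B \ R (B ∪ {e})).ncard : ℤ) := by
    intro B _
    have hsub : R (B ∪ {e}) ⊆ R B := hmono B (B ∪ {e}) Set.subset_union_left
    have := Set.ncard_diff hsub (Set.toFinite _)
    have hle : (R (B ∪ {e})).ncard ≤ (R B).ncard :=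
      Set.ncard_le_ncard hsub (Set.toFinite _)
    rw [hCount, hCount]
    push_cast [this, Nat.cast_sub hle]
    ring
  rw [ge_iff_le, hdiff X (fun h => heY (hXY h)), hdiff Y heY]
  exact_mod_cast Set.ncard_le_ncard hkey (Set.toFinite _)
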